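/- arXiv:1301.5728 — 6 statements merged into one kernel-verified Lean document; each statement's English description precedes it below -/
import Mathlib

section
/- Let N ≥ 1, let G : ℝ^N → ℝ be twice continuously differentiable and let F : ℝ^N → ℝ be continuously differentiable. If u* ∈ ℝ^N is a density-evolution fixed point, i.e. u* = ∇F(∇G(u*)), then ∇V(u*) = 0, so u* is a stationary point of the potential V. -/
open scoped InnerProductSpace

/-- For `G` twice continuously differentiable and `F` continuously
differentiable on `ℝ^N`, if `u*` is a density-evolution fixed point, i.e.
`u* = ∇F(∇G(u*))`, then `u*` is a stationary point of the potential
`V(u) = ⟪u, ∇G(u)⟫ − G(u) − F(∇G(u))`, i.e. `∇V(u*) = 0`. -/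
theorem stmt_2 (N : ℕ) (hN : 1 ≤ N)
    (F G : EuclideanSpace ℝ (Fin N) → ℝ)
    (hG : ContDiff ℝ 2 G) (hF : ContDiff ℝ 1 F)
    (ustar : EuclideanSpace ℝ (Fin N))
    (hfix : ustar = gradient F (gradient G ustar)) :
    gradient (fun w => ⟪w, gradient G w⟫_ℝ - G w - F (gradient G w)) ustar = 0 := by
  set g : EuclideanSpace ℝ (Fin N) → EuclideanSpace ℝ (Fin N) := fun w => gradient G w with hgdef
  -- g is C¹
  have hgc : ContDiff ℝ 1 g := by
    have h1 : ContDiff ℝ 1 (fderiv ℝ G) := hG.fderiv_right (by norm_num)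
    exact (InnerProductSpace.toDual ℝ (EuclideanSpace ℝ (Fin N))).symm.contDiff.comp h1
  set g' : EuclideanSpace ℝ (Fin N) →L[ℝ] EuclideanSpace ℝ (Fin N) := fderiv ℝ g ustar with hg'def
  have hg' : HasFDerivAt g g' ustar := (hgc.differentiable one_ne_zero ustar).hasFDerivAt
  have hGd : HasGradientAt G (g ustar) ustar :=
    (hG.differentiable (by norm_num) ustar).hasGradientAt
  have hFd : HasGradientAt F (gradient F (g ustar)) (g ustar) :=
    (hF.differentiable one_ne_zero (g ustar)).hasGradientAt
  have h1 : HasFDerivAt (fun w => ⟪w, g w⟫_ℝ)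
      ((fderivInnerCLM ℝ (ustar, g ustar)).comp
        ((ContinuousLinearMap.id ℝ (EuclideanSpace ℝ (Fin N))).prod g')) ustar :=
    (hasFDerivAt_id ustar).inner ℝ hg'
  have h3 : HasFDerivAt (fun w => F (g w))
      ((InnerProductSpace.toDual ℝ (EuclideanSpace ℝ (Fin N)) (gradient F (g ustar))).comp g') ustar :=
    hFd.hasFDerivAt.comp ustar hg'
  have hV : HasFDerivAt (fun w => ⟪w, g w⟫_ℝ - G w - F (g w))
      (((fderivInnerCLM ℝ (ustar, g ustar)).comp
        ((ContinuousLinearMap.id ℝ (EuclideanSpace ℝ (Fin N))).prod g')) -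
        (InnerProductSpace.toDual ℝ (EuclideanSpace ℝ (Fin N)) (g ustar)) -
        ((InnerProductSpace.toDual ℝ (EuclideanSpace ℝ (Fin N)) (gradient F (g ustar))).comp g')) ustar :=
    (h1.sub hGd.hasFDerivAt).sub h3
  have hzero : (((fderivInnerCLM ℝ (ustar, g ustar)).comp
        ((ContinuousLinearMap.id ℝ (EuclideanSpace ℝ (Fin N))).prod g')) -
        (InnerProductSpace.toDual ℝ (EuclideanSpace ℝ (Fin N)) (g ustar)) -
        ((InnerProductSpace.toDual ℝ (EuclideanSpace ℝ (Fin N)) (gradient F (g ustar))).comp g')) = 0 := by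
    ext h
    simp only [ContinuousLinearMap.coe_comp', Function.comp_apply,
      ContinuousLinearMap.prod_apply, ContinuousLinearMap.coe_id', id_eq,
      fderivInnerCLM_apply, ContinuousLinearMap.coe_sub',  Pi.sub_apply,
      InnerProductSpace.toDual_apply_apply, ContinuousLinearMap.zero_apply]
    rw [← hfix, real_inner_comm (g ustar) h]
    ring
  rw [hzero] at hV
  have := hV.hasGradientAt.gradient
  rw [this, map_zero]
end

section
/- Let N ≥ 1, let G : ℝ^N → ℝ be twice continuously differentiable and let F : ℝ^N → ℝ be continuously differentiable, and let u ∈ ℝ^N be such that the Hessian matrix Hess G(u) is invertible. Then ∇V(u) = 0 if and only if u = ∇F(∇G(u)), i.e. u is a stationary point of the potential V if and only if u is a density-evolution fixed point. -/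
open scoped InnerProductSpace

/-- For `G` twice continuously differentiable and `F` continuously
differentiable on `ℝ^N`, if the Hessian `Hess G(u) = D(∇G)(u)` is invertible
(bijective as a linear map), then `u` is a stationary point of the potential
`V(u) = ⟪u, ∇G(u)⟫ − G(u) − F(∇G(u))` if and only if `u` is a density-evolution
fixed point, i.e. `u = ∇F(∇G(u))`. -/
theorem stmt_3 (N : ℕ) (hN : 1 ≤ N)
    (F G : EuclideanSpace ℝ (Fin N) → ℝ)
    (hG : ContDiff ℝ 2 G) (hF : ContDiff ℝ 1 F)
    (u : EuclideanSpace ℝ (Fin N))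
    (hinv : Function.Bijective (fderiv ℝ (gradient G) u)) :
    gradient (fun w => ⟪w, gradient G w⟫_ℝ - G w - F (gradient G w)) u = 0
      ↔ u = gradient F (gradient G u) := by
  classical
  set g := gradient G with hgdef
  -- g is C¹
  have hgdiff : ContDiff ℝ 1 g := by
    have h2 : ContDiff ℝ (1 + 1) G := by norm_num; exact hG
    have h1 : ContDiff ℝ 1 (fderiv ℝ G) := (contDiff_succ_iff_fderiv.mp h2).2.2
    have : g = fun x => (InnerProductSpace.toDual ℝ (EuclideanSpace ℝ (Fin N))).symm
        (fderiv ℝ G x) := rfl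
    rw [this]
    exact ((InnerProductSpace.toDual ℝ (EuclideanSpace ℝ (Fin N))).symm.toContinuousLinearEquiv
      : _ ≃L[ℝ] _).toContinuousLinearMap.contDiff.comp h1
  have hGd : DifferentiableAt ℝ G u := hG.differentiable (by norm_num) u
  have hgd : DifferentiableAt ℝ g u := hgdiff.differentiable one_ne_zero u
  have hFd : DifferentiableAt ℝ F (g u) := hF.differentiable one_ne_zero (g u)
  set B := fderiv ℝ g u with hBdef
  have hB : HasFDerivAt g B u := hgd.hasFDerivAt
  set p := gradient F (g u) with hpdef
  -- derivative of the three pieces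
  have h1 : HasFDerivAt (fun w => ⟪w, g w⟫_ℝ)
      ((fderivInnerCLM ℝ (u, g u)).comp ((ContinuousLinearMap.id ℝ _).prod B)) u :=
    HasFDerivAt.inner ℝ (hasFDerivAt_id u) hB
  have h2 : HasFDerivAt G (InnerProductSpace.toDual ℝ _ (g u)) u :=
    hGd.hasGradientAt.hasFDerivAt
  have h3 : HasFDerivAt (fun w => F (g w))
      ((InnerProductSpace.toDual ℝ _ p).comp B) u :=
    (hFd.hasGradientAt.hasFDerivAt).comp u hB
  have hV : HasFDerivAt (fun w => ⟪w, g w⟫_ℝ - G w - F (g w))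
      ((fderivInnerCLM ℝ (u, g u)).comp ((ContinuousLinearMap.id ℝ _).prod B)
        - InnerProductSpace.toDual ℝ _ (g u) - (InnerProductSpace.toDual ℝ _ p).comp B) u :=
    (h1.sub h2).sub h3
  set D := (fderivInnerCLM ℝ (u, g u)).comp ((ContinuousLinearMap.id ℝ _).prod B)
        - InnerProductSpace.toDual ℝ _ (g u) - (InnerProductSpace.toDual ℝ _ p).comp B with hDdef
  have hDapp : ∀ h, D h = ⟪u - p, B h⟫_ℝ := by
    intro h
    simp only [hDdef, ContinuousLinearMap.sub_apply, ContinuousLinearMap.comp_apply,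
      ContinuousLinearMap.prod_apply, ContinuousLinearMap.id_apply, fderivInnerCLM_apply,
      InnerProductSpace.toDual_apply_apply, inner_sub_left]
    rw [real_inner_comm (g u) h]
    ring
  have hgradV : gradient (fun w => ⟪w, g w⟫_ℝ - G w - F (g w)) u =
      (InnerProductSpace.toDual ℝ (EuclideanSpace ℝ (Fin N))).symm D := by
    rw [gradient, hV.fderiv]
  rw [hgradV]
  rw [LinearIsometryEquiv.map_eq_zero_iff]
  constructor
  · intro hD
    obtain ⟨h, hh⟩ := hinv.2 (u - p)
    have := hDapp h
    rw [hD] at this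
    simp only [ContinuousLinearMap.zero_apply] at this
    rw [hh] at this
    exact sub_eq_zero.mp (inner_self_eq_zero.mp this.symm)
  · intro hu
    ext h
    rw [ContinuousLinearMap.zero_apply, hDapp h, ← hu]
    simp
end

section
/- Let N ≥ 1, let F : ℝ^N → ℝ be twice continuously differentiable and let G : ℝ^N → ℝ be continuously differentiable, and let v ∈ ℝ^N be such that the Hessian matrix Hess F(v) is invertible. Then ∇Ṽ(v) = 0 if and only if v = ∇G(∇F(v)), i.e. v is a stationary point of the dual potential Ṽ if and only if (∇F(v), v) is a fixed point of the density-evolution equations u = ∇F(v), v = ∇G(u). -/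
open scoped InnerProductSpace

/-- For `F` twice continuously differentiable and `G` continuously
differentiable on `ℝ^N`, if the Hessian `Hess F(v) = D(∇F)(v)` is invertible
(bijective as a linear map), then `v` is a stationary point of the dual
potential `Ṽ(v) = ⟪∇F(v), v⟫ − G(∇F(v)) − F(v)` if and only if
`v = ∇G(∇F(v))`, i.e. `(∇F(v), v)` is a fixed point of the density-evolution
equations `u = ∇F(v)`, `v = ∇G(u)`. -/
theorem stmt_5 (N : ℕ) (hN : 1 ≤ N)
    (F G : EuclideanSpace ℝ (Fin N) → ℝ)
    (hF : ContDiff ℝ 2 F) (hG : ContDiff ℝ 1 G)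
    (v : EuclideanSpace ℝ (Fin N))
    (hinv : Function.Bijective (fderiv ℝ (gradient F) v)) :
    gradient (fun w => ⟪gradient F w, w⟫_ℝ - G (gradient F w) - F w) v = 0
      ↔ v = gradient G (gradient F v) := by
  classical
  set u : EuclideanSpace ℝ (Fin N) := gradient F v with hu
  set g : EuclideanSpace ℝ (Fin N) := gradient G u with hg
  set H : EuclideanSpace ℝ (Fin N) →L[ℝ] EuclideanSpace ℝ (Fin N) := fderiv ℝ (gradient F) v with hH
  -- gradient F is C¹
  have hgradF : ContDiff ℝ 1 (gradient F) := by
    have h1 : ContDiff ℝ 1 (fderiv ℝ F) := hF.fderiv_right (by norm_num)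
    have h2 : ContDiff ℝ 1 (fun w => (InnerProductSpace.toDual ℝ (EuclideanSpace ℝ (Fin N))).symm (fderiv ℝ F w)) :=
      (InnerProductSpace.toDual ℝ (EuclideanSpace ℝ (Fin N))).symm.contDiff.comp h1
    exact h2
  have hHder : HasFDerivAt (gradient F) H v :=
    ((hgradF.differentiable (by norm_num)) v).hasFDerivAt
  have hFgrad : HasGradientAt F u v :=
    ((hF.differentiable (by norm_num)) v).hasGradientAt
  have hGgrad : HasGradientAt G g u :=
    ((hG.differentiable (by norm_num)) u).hasGradientAt
  -- derivative of the inner product term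
  have hInner : HasFDerivAt (fun w => ⟪gradient F w, w⟫_ℝ)
      ((fderivInnerCLM ℝ (u, v)).comp (H.prod (ContinuousLinearMap.id ℝ (EuclideanSpace ℝ (Fin N))))) v :=
    hHder.inner ℝ (hasFDerivAt_id v)
  -- derivative of G ∘ gradient F
  have hComp : HasFDerivAt (fun w => G (gradient F w))
      ((InnerProductSpace.toDual ℝ (EuclideanSpace ℝ (Fin N)) g).comp H) v :=
    (hGgrad.hasFDerivAt).comp v hHder
  have hFder : HasFDerivAt F (InnerProductSpace.toDual ℝ (EuclideanSpace ℝ (Fin N)) u) v := hFgrad.hasFDerivAt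
  have hTotal : HasFDerivAt (fun w => ⟪gradient F w, w⟫_ℝ - G (gradient F w) - F w)
      ((fderivInnerCLM ℝ (u, v)).comp (H.prod (ContinuousLinearMap.id ℝ (EuclideanSpace ℝ (Fin N))))
        - (InnerProductSpace.toDual ℝ (EuclideanSpace ℝ (Fin N)) g).comp H - InnerProductSpace.toDual ℝ (EuclideanSpace ℝ (Fin N)) u) v :=
    (hInner.sub hComp).sub hFder
  have hEq : ((fderivInnerCLM ℝ (u, v)).comp (H.prod (ContinuousLinearMap.id ℝ (EuclideanSpace ℝ (Fin N))))
        - (InnerProductSpace.toDual ℝ (EuclideanSpace ℝ (Fin N)) g).comp H - InnerProductSpace.toDual ℝ (EuclideanSpace ℝ (Fin N)) u)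
      = InnerProductSpace.toDual ℝ (EuclideanSpace ℝ (Fin N)) (ContinuousLinearMap.adjoint H (v - g)) := by
    ext h
    simp only [ContinuousLinearMap.sub_apply, ContinuousLinearMap.comp_apply,
      ContinuousLinearMap.prod_apply, ContinuousLinearMap.id_apply, fderivInnerCLM_apply,
      InnerProductSpace.toDual_apply_apply, ContinuousLinearMap.adjoint_inner_left, inner_sub_left]
    ring_nf
    rw [real_inner_comm (H h) v]
    ring
  have hGradV : HasGradientAt (fun w => ⟪gradient F w, w⟫_ℝ - G (gradient F w) - F w)
      (ContinuousLinearMap.adjoint H (v - g)) v := by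
    rw [hasGradientAt_iff_hasFDerivAt]
    rw [← hEq]; exact hTotal
  rw [hGradV.gradient]
  constructor
  · intro h0
    obtain ⟨y, hy⟩ := hinv.2 (v - g)
    have : ⟪v - g, v - g⟫_ℝ = 0 := by
      calc ⟪v - g, v - g⟫_ℝ = ⟪v - g, H y⟫_ℝ := by rw [hy]
        _ = ⟪ContinuousLinearMap.adjoint H (v - g), y⟫_ℝ :=
          (ContinuousLinearMap.adjoint_inner_left H y (v - g)).symm
        _ = 0 := by rw [h0]; simp
    have : v - g = 0 := by
      rwa [inner_self_eq_zero] at this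
    rw [sub_eq_zero] at this
    exact this
  · intro hvg
    rw [← hvg]
    simp
end

section
/- Let N ≥ 1, K ≥ 1, let W be a nonnegative integer, let F : ℝ^N → ℝ be thrice continuously differentiable, and let v : ℝ^K → ℝ^N be twice continuously differentiable. Fix x ∈ ℝ^K and set σ² = (1/(2W+1)) Σ_{m=−W}^{W} m². Then, as L → ∞, L² · [ (1/(2W+1)^K) Σ_{m ∈ [−W,W]^K ∩ ℤ^K} ∇F(v(x + m/L)) − ∇F(v(x)) − (σ²/(2L²)) Σ_{α=1}^{K} ( Hess F(v(x)) · ∂²v/∂(x^α)²(x) + D³F(v(x))[∂v/∂x^α(x), ∂v/∂x^α(x)] ) ] → 0, where the a-th component of D³F(v)[w, w] is Σ_{b,c} ∂³F/∂v_a∂v_b∂v_c(v) w_b w_c. -/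
open Filter

lemma taylor2t {E G : Type*} [NormedAddCommGroup E] [NormedSpace ℝ E]
    [NormedAddCommGroup G] [NormedSpace ℝ G]
    (g : E → G) (hg : ContDiff ℝ 2 g) (x w : E) :
    Tendsto (fun t : ℝ => (t ^ 2)⁻¹ • (g (x + t • w) - g x - t • fderiv ℝ g x w
      - (t ^ 2 / 2) • fderiv ℝ (fderiv ℝ g) x w w))
      (nhdsWithin 0 (Set.Ioi 0)) (nhds 0) := by
  have hgd : Differentiable ℝ g := hg.differentiable (by norm_num)
  have hDc : ContDiff ℝ 1 (fderiv ℝ g) := hg.fderiv_right (by norm_num)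
  have hDd : Differentiable ℝ (fderiv ℝ g) := hDc.differentiable (by norm_num)
  set D := fderiv ℝ g with hD
  set B := fderiv ℝ D x with hB
  set r : ℝ → G := fun t => g (x + t • w) - g x - t • D x w - (t ^ 2 / 2) • B w w with hr
  set r' : ℝ → G := fun t => D (x + t • w) w - D x w - t • B w w with hr'
  -- the curve
  have hcurve : ∀ t : ℝ, HasDerivAt (fun s : ℝ => x + s • w) w t := by
    intro t
    simpa using ((hasDerivAt_id t).smul_const w).const_add x
  have hrd : ∀ t : ℝ, HasDerivAt r (r' t) t := by
    intro t
    have h1 : HasDerivAt (fun s : ℝ => g (x + s • w)) (D (x + t • w) w) t :=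
      (hgd (x + t • w)).hasFDerivAt.comp_hasDerivAt t (hcurve t)
    have h2 : HasDerivAt (fun s : ℝ => s • D x w) (D x w) t := by
      simpa using (hasDerivAt_id t).smul_const (D x w)
    have h3 : HasDerivAt (fun s : ℝ => (s ^ 2 / 2) • B w w) (t • B w w) t := by
      have : HasDerivAt (fun s : ℝ => s ^ 2 / 2) t t := by
        simpa using (hasDerivAt_pow 2 t).div_const 2
      simpa using this.smul_const (B w w)
    exact ((h1.sub_const (g x)).sub h2).sub h3
  -- r' is o(t)
  have hr'o : (fun t : ℝ => r' t) =o[nhds (0:ℝ)] fun t => t := by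
    have hDc2 : HasDerivAt (fun t : ℝ => D (x + t • w)) (B w) 0 := by
      have h0 : x + (0:ℝ) • w = x := by simp
      have := (hDd (x + (0:ℝ) • w)).hasFDerivAt.comp_hasDerivAt 0 (hcurve 0)
      rw [h0] at this
      exact this
    have happ : HasDerivAt (fun t : ℝ => D (x + t • w) w) (B w w) 0 :=
      hDc2.clm_apply (hasDerivAt_const 0 w) |>.congr_deriv (by simp)
    have h2 : HasDerivAt (fun t : ℝ => t • B w w) (B w w) 0 := by
      simpa using (hasDerivAt_id (0:ℝ)).smul_const (B w w)
    have : HasDerivAt r' 0 0 := by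
      exact ((happ.sub_const (D x w)).sub h2).congr_deriv (sub_self _)
    have := this.hasFDerivAt.isLittleO
    simpa [hr'] using this
  rw [NormedAddCommGroup.tendsto_nhds_zero]
  intro ε hε
  have hε2 : (0:ℝ) < ε / 2 := by linarith
  obtain ⟨δ, hδ, hδh⟩ := Metric.eventually_nhds_iff.mp (hr'o.def hε2)
  filter_upwards [Ioo_mem_nhdsGT_of_mem (Set.mem_Ico.mpr ⟨le_refl (0:ℝ), hδ⟩)] with t ht
  obtain ⟨ht0, htδ⟩ := ht
  have key : ‖r t - r 0‖ ≤ (ε / 2 * t) * (t - 0) := by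
    refine norm_image_sub_le_of_norm_deriv_le_segment'
      (f' := r') (fun s hs => (hrd s).hasDerivWithinAt) ?_ t (Set.right_mem_Icc.mpr ht0.le)
    intro s hs
    have hsδ : dist s (0:ℝ) < δ := by
      rw [Real.dist_eq, sub_zero, abs_of_nonneg hs.1]
      exact hs.2.trans htδ
    have := hδh hsδ
    rw [Real.norm_eq_abs, abs_of_nonneg hs.1] at this
    calc ‖r' s‖ ≤ ε / 2 * s := this
      _ ≤ ε / 2 * t := by nlinarith [hs.2, hε2]
  have hr0 : r 0 = 0 := by simp [hr]
  rw [hr0, sub_zero] at key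
  have ht2 : (0:ℝ) < t ^ 2 := by positivity
  have : ‖(t ^ 2)⁻¹ • r t‖ ≤ ε / 2 := by
    rw [norm_smul, Real.norm_eq_abs, abs_inv, abs_of_pos ht2]
    rw [inv_mul_le_iff₀ ht2]
    calc ‖r t‖ ≤ ε / 2 * t * (t - 0) := key
      _ = t ^ 2 * (ε / 2) := by ring
  calc ‖(t ^ 2)⁻¹ • (g (x + t • w) - g x - t • D x w - (t ^ 2 / 2) • B w w)‖
      = ‖(t ^ 2)⁻¹ • r t‖ := rfl
    _ ≤ ε / 2 := this
    _ < ε := by linarith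

lemma taylor2L {E G : Type*} [NormedAddCommGroup E] [NormedSpace ℝ E]
    [NormedAddCommGroup G] [NormedSpace ℝ G]
    (g : E → G) (hg : ContDiff ℝ 2 g) (x w : E) :
    Tendsto (fun L : ℝ => (L ^ 2) • (g (x + L⁻¹ • w) - g x - L⁻¹ • fderiv ℝ g x w
      - (2 * L ^ 2)⁻¹ • fderiv ℝ (fderiv ℝ g) x w w)) atTop (nhds 0) := by
  have h := (taylor2t g hg x w).comp tendsto_inv_atTop_nhdsGT_zero
  refine h.congr' ?_
  filter_upwards [eventually_gt_atTop (0:ℝ)] with L hL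
  have hL0 : L ≠ 0 := hL.ne'
  simp only [Function.comp]
  congr 1
  · rw [inv_pow, inv_inv]
  · congr 2
    field_simp

lemma fderiv_clm_apply_const {E F G : Type*} [NormedAddCommGroup E] [NormedSpace ℝ E]
    [NormedAddCommGroup F] [NormedSpace ℝ F] [NormedAddCommGroup G] [NormedSpace ℝ G]
    {c : E → F →L[ℝ] G} {p : E} (hc : DifferentiableAt ℝ c p) (u : F) (q : E) :
    fderiv ℝ (fun y => c y u) p q = fderiv ℝ c p q u := by
  rw [fderiv_clm_apply hc (differentiableAt_const u)]
  simp

lemma chain2 {E F₁ G : Type*} [NormedAddCommGroup E] [NormedSpace ℝ E]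
    [NormedAddCommGroup F₁] [NormedSpace ℝ F₁] [NormedAddCommGroup G] [NormedSpace ℝ G]
    (φ : F₁ → G) (v : E → F₁) (hφ : ContDiff ℝ 2 φ) (hv : ContDiff ℝ 2 v) (x e : E) :
    fderiv ℝ (fderiv ℝ (fun y => φ (v y))) x e e =
      fderiv ℝ φ (v x) (fderiv ℝ (fderiv ℝ v) x e e)
        + fderiv ℝ (fderiv ℝ φ) (v x) (fderiv ℝ v x e) (fderiv ℝ v x e) := by
  have hφd : Differentiable ℝ φ := hφ.differentiable two_ne_zero
  have hvd : Differentiable ℝ v := hv.differentiable two_ne_zero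
  have hDφ : Differentiable ℝ (fderiv ℝ φ) :=
    (hφ.fderiv_right (m := 1) (le_refl _)).differentiable one_ne_zero
  have hDv : Differentiable ℝ (fderiv ℝ v) :=
    (hv.fderiv_right (m := 1) (le_refl _)).differentiable one_ne_zero
  have hc : DifferentiableAt ℝ (fun y => fderiv ℝ φ (v y)) x :=
    (hDφ (v x)).comp x (hvd x)
  have h1 : fderiv ℝ (fun y => φ (v y)) = fun y => (fderiv ℝ φ (v y)).comp (fderiv ℝ v y) := by
    funext y
    exact fderiv_comp y (hφd (v y)) (hvd y)
  rw [h1, fderiv_clm_comp hc (hDv x)]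
  have h2 : fderiv ℝ (fun y => fderiv ℝ φ (v y)) x =
      (fderiv ℝ (fderiv ℝ φ) (v x)).comp (fderiv ℝ v x) :=
    fderiv_comp x (hDφ (v x)) (hvd x)
  simp [h2]

lemma sum_Icc_cast_zero (W : ℕ) : ∑ j ∈ Finset.Icc (-(W:ℤ)) W, (j : ℝ) = 0 := by
  apply Finset.sum_involution (fun a _ => -a)
  case hg₁ => intro a ha; push_cast; ring
  case hg₃ =>
    intro a ha h hfa
    have : a = 0 := by omega
    simp [this] at h
  case g_mem =>
    intro a ha
    simp only [Finset.mem_Icc] at ha ⊢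
    omega
  case hg₄ => intro a ha; simp

lemma card_Icc_int (W : ℕ) : (Finset.Icc (-(W:ℤ)) W).card = 2 * W + 1 := by
  rw [Int.card_Icc]; omega

lemma box_eq (K W : ℕ) : Finset.Icc (fun _ : Fin K => -(W:ℤ)) (fun _ : Fin K => (W:ℤ))
    = Fintype.piFinset (fun _ : Fin K => Finset.Icc (-(W:ℤ)) (W:ℤ)) := by
  ext m
  simp [Finset.mem_Icc, Fintype.mem_piFinset, Pi.le_def, forall_and]

lemma moment1 (K W : ℕ) (α : Fin K) :
    ∑ m ∈ Fintype.piFinset (fun _ : Fin K => Finset.Icc (-(W:ℤ)) (W:ℤ)), ((m α : ℤ) : ℝ) = 0 := by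
  have key : ∀ m : Fin K → ℤ, ((m α : ℤ) : ℝ) = ∏ i, if i = α then ((m i : ℤ) : ℝ) else 1 := by
    intro m
    rw [Finset.prod_ite_eq' Finset.univ α (fun i => ((m i : ℤ) : ℝ))]
    simp
  simp only [key]
  rw [← Finset.prod_univ_sum (fun _ : Fin K => Finset.Icc (-(W:ℤ)) (W:ℤ))
    (fun i (j : ℤ) => if i = α then (j : ℝ) else 1)]
  apply Finset.prod_eq_zero (Finset.mem_univ α)
  simpa using sum_Icc_cast_zero W

lemma moment2 (K W : ℕ) (α β : Fin K) :
    ∑ m ∈ Fintype.piFinset (fun _ : Fin K => Finset.Icc (-(W:ℤ)) (W:ℤ)),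
      ((m α : ℤ) : ℝ) * ((m β : ℤ) : ℝ) =
      if α = β then (2 * (W:ℝ) + 1) ^ (K - 1) * ∑ j ∈ Finset.Icc (-(W:ℤ)) W, (j:ℝ)^2
      else 0 := by
  rcases eq_or_ne α β with rfl | hne
  · simp only [if_pos rfl]
    have key : ∀ m : Fin K → ℤ, ((m α : ℤ) : ℝ) * ((m α : ℤ) : ℝ)
        = ∏ i, if i = α then ((m i : ℤ) : ℝ)^2 else 1 := by
      intro m
      rw [Finset.prod_ite_eq' Finset.univ α (fun i => ((m i : ℤ) : ℝ)^2)]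
      simp [sq]
    simp only [key]
    rw [← Finset.prod_univ_sum (fun _ : Fin K => Finset.Icc (-(W:ℤ)) (W:ℤ))
      (fun i (j : ℤ) => if i = α then (j : ℝ)^2 else 1)]
    have hfac : ∀ i : Fin K, (∑ j ∈ Finset.Icc (-(W:ℤ)) (W:ℤ), if i = α then ((j:ℤ):ℝ)^2 else 1)
        = if i = α then (∑ j ∈ Finset.Icc (-(W:ℤ)) W, (j:ℝ)^2) else (2*(W:ℝ)+1) := by
      intro i
      rcases eq_or_ne i α with rfl | h
      · simp
      · simp [h, Finset.sum_const, card_Icc_int W]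
    rw [Finset.prod_congr rfl (fun i _ => hfac i)]
    rw [← Finset.mul_prod_erase Finset.univ _ (Finset.mem_univ α)]
    rw [if_pos rfl]
    rw [Finset.prod_congr rfl (fun i hi => if_neg (Finset.ne_of_mem_erase hi)), Finset.prod_const]
    rw [Finset.card_erase_of_mem (Finset.mem_univ α), Finset.card_univ, Fintype.card_fin]
    ring_nf
    simp [mul_comm]
  · simp only [if_neg hne]
    have key : ∀ m : Fin K → ℤ, ((m α : ℤ) : ℝ) * ((m β : ℤ) : ℝ)
        = ∏ i, ((if i = α then ((m i : ℤ) : ℝ) else 1) * (if i = β then ((m i : ℤ) : ℝ) else 1)) := by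
      intro m
      rw [Finset.prod_mul_distrib,
        Finset.prod_ite_eq' Finset.univ α (fun i => ((m i : ℤ) : ℝ)),
        Finset.prod_ite_eq' Finset.univ β (fun i => ((m i : ℤ) : ℝ))]
      simp
    simp only [key]
    rw [← Finset.prod_univ_sum (fun _ : Fin K => Finset.Icc (-(W:ℤ)) (W:ℤ))
      (fun i (j : ℤ) => (if i = α then (j : ℝ) else 1) * (if i = β then (j : ℝ) else 1))]
    apply Finset.prod_eq_zero (Finset.mem_univ α)
    rw [show (∑ j ∈ Finset.Icc (-(W:ℤ)) (W:ℤ),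
        ((if α = α then ((j:ℤ):ℝ) else 1) * (if α = β then ((j:ℤ):ℝ) else 1)))
      = ∑ j ∈ Finset.Icc (-(W:ℤ)) (W:ℤ), ((j:ℤ):ℝ) by
        apply Finset.sum_congr rfl; intro j _; simp [hne]]
    simpa using sum_Icc_cast_zero W

/-- Continuum approximation of the coupled density-evolution
update.  For `F : ℝ^N → ℝ` thrice continuously differentiable and a twice
continuously differentiable profile `v : ℝ^K → ℝ^N`, with
`σ² = (1/(2W+1)) ∑_{m=−W}^{W} m²`, the coupling average of `∇F` expands as
`(1/(2W+1)^K) ∑_m ∇F(v(x+m/L)) = ∇F(v(x)) + (σ²/(2L²)) ∑_α ( Hess F(v(x)) ∂²_α v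
+ D³F(v(x))[∂_α v, ∂_α v] ) + o(L^{−2})` as `L → ∞`, where
`Hess F(y) = D(∇F)(y)` and `D³F(y)[w,w] = D(z ↦ D(∇F)(z) w)(y) w`. -/
theorem stmt_9 (N K : ℕ) (hN : 1 ≤ N) (hK : 1 ≤ K) (W : ℕ)
    (F : EuclideanSpace ℝ (Fin N) → ℝ) (hF : ContDiff ℝ 3 F)
    (v : EuclideanSpace ℝ (Fin K) → EuclideanSpace ℝ (Fin N))
    (hv : ContDiff ℝ 2 v)
    (x : EuclideanSpace ℝ (Fin K)) (σ2 : ℝ)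
    (hσ : σ2 = (2 * (W : ℝ) + 1)⁻¹ * ∑ m ∈ Finset.Icc (-(W : ℤ)) (W : ℤ), (m : ℝ) ^ 2) :
    Tendsto
      (fun L : ℝ => (L ^ 2) •
        (((2 * (W : ℝ) + 1) ^ K)⁻¹ •
            ∑ m ∈ Finset.Icc (fun _ : Fin K => -(W : ℤ)) (fun _ : Fin K => (W : ℤ)),
              gradient F (v (x + (WithLp.equiv 2 (Fin K → ℝ)).symm
                (fun α : Fin K => (m α : ℝ) / L)))
          - gradient F (v x)
          - (σ2 / (2 * L ^ 2)) •
              ∑ α : Fin K,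
                (fderiv ℝ (gradient F) (v x)
                    (iteratedFDeriv ℝ 2 v x
                      ![EuclideanSpace.single α 1, EuclideanSpace.single α 1])
                  + fderiv ℝ
                      (fun y => fderiv ℝ (gradient F) y
                        (fderiv ℝ v x (EuclideanSpace.single α 1)))
                      (v x) (fderiv ℝ v x (EuclideanSpace.single α 1)))))
      atTop (nhds 0) := by
  classical
  have hφ : ContDiff ℝ 2 (gradient F) := by
    have h1 : ContDiff ℝ 2 (fderiv ℝ F) := hF.fderiv_right (by norm_num)
    exact (InnerProductSpace.toDual ℝ (EuclideanSpace ℝ (Fin N))).symm.contDiff.comp h1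
  set G : EuclideanSpace ℝ (Fin K) → EuclideanSpace ℝ (Fin N) :=
    fun y => gradient F (v y) with hGdef
  have hG : ContDiff ℝ 2 G := hφ.comp hv
  set e : Fin K → EuclideanSpace ℝ (Fin K) :=
    fun α => EuclideanSpace.single α (1:ℝ) with he
  set wv : (Fin K → ℤ) → EuclideanSpace ℝ (Fin K) :=
    fun m => ∑ α, ((m α : ℤ) : ℝ) • e α with hwv
  set B := fderiv ℝ (fderiv ℝ G) x with hBdef
  set box := Finset.Icc (fun _ : Fin K => -(W:ℤ)) (fun _ : Fin K => (W:ℤ)) with hbox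
  set c : ℝ := ((2 * (W : ℝ) + 1) ^ K)⁻¹ with hc
  have hbase : (0:ℝ) < 2 * (W:ℝ) + 1 := by positivity
  -- wv applied coordinatewise
  have hwapp : ∀ (m : Fin K → ℤ) (i : Fin K), wv m i = (m i : ℝ) := by
    intro m i
    show (∑ α, ((m α : ℤ) : ℝ) • e α) i = _
    rw [WithLp.ofLp_sum, Finset.sum_apply]
    simp [he, EuclideanSpace.single_apply]
  -- the shifted point
  have harg : ∀ (m : Fin K → ℤ) (L : ℝ), L ≠ 0 →
      (WithLp.equiv 2 (Fin K → ℝ)).symm (fun α : Fin K => (m α : ℝ) / L) = L⁻¹ • wv m := by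
    intro m L hL
    ext i
    have := hwapp m i
    simp only [WithLp.equiv_symm_apply, PiLp.toLp_apply, PiLp.smul_apply, smul_eq_mul]
    rw [this, div_eq_inv_mul]
  -- sum of wv over the box is zero
  have hw0 : ∑ m ∈ box, wv m = 0 := by
    rw [hbox, box_eq]
    simp only [hwv]
    rw [Finset.sum_comm]
    refine Finset.sum_eq_zero fun α _ => ?_
    rw [← Finset.sum_smul, moment1 K W α, zero_smul]
  -- the statement's second-order sum equals ∑ B eα eα
  have hDφd : Differentiable ℝ (fderiv ℝ (gradient F)) :=
    (hφ.fderiv_right (m := 1) (le_refl _)).differentiable one_ne_zero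
  have hS : (∑ α : Fin K,
        (fderiv ℝ (gradient F) (v x)
            (iteratedFDeriv ℝ 2 v x
              ![EuclideanSpace.single α 1, EuclideanSpace.single α 1])
          + fderiv ℝ
              (fun y => fderiv ℝ (gradient F) y
                (fderiv ℝ v x (EuclideanSpace.single α 1)))
              (v x) (fderiv ℝ v x (EuclideanSpace.single α 1))))
      = ∑ α, B (e α) (e α) := by
    refine Finset.sum_congr rfl fun α _ => ?_
    rw [iteratedFDeriv_two_apply]
    simp only [Matrix.cons_val_zero, Matrix.cons_val_one, Matrix.head_cons]
    rw [fderiv_clm_apply_const (hDφd (v x)) _ _]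
    rw [hBdef, hGdef, chain2 (gradient F) v hφ hv x (e α)]
  -- second-moment identity for B
  have hexp : ∀ m : Fin K → ℤ, B (wv m) (wv m)
      = ∑ α, ∑ β, (((m α : ℤ) : ℝ) * ((m β : ℤ) : ℝ)) • B (e α) (e β) := by
    intro m
    rw [show wv m = ∑ α, ((m α : ℤ) : ℝ) • e α from rfl]
    simp only [map_sum, map_smul, ContinuousLinearMap.sum_apply, ContinuousLinearMap.coe_smul',
      Pi.smul_apply, Finset.smul_sum, smul_smul]
    rw [Finset.sum_comm]
    refine Finset.sum_congr rfl fun α _ => Finset.sum_congr rfl fun β _ => ?_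
    rw [mul_comm]
  have hscal : c * ((2 * (W:ℝ) + 1) ^ (K - 1) * ∑ j ∈ Finset.Icc (-(W:ℤ)) W, (j:ℝ)^2) = σ2 := by
    obtain ⟨K', rfl⟩ : ∃ K', K = K' + 1 := ⟨K - 1, by omega⟩
    rw [hσ, hc]
    simp only [Nat.add_sub_cancel]
    rw [pow_succ]
    field_simp
  have hQ : c • ∑ m ∈ box, B (wv m) (wv m) = σ2 • ∑ α, B (e α) (e α) := by
    have h1 : ∑ m ∈ box, B (wv m) (wv m)
        = ∑ α, ∑ β, (∑ m ∈ box, ((m α : ℤ) : ℝ) * ((m β : ℤ) : ℝ)) • B (e α) (e β) := by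
      rw [Finset.sum_congr rfl fun m _ => hexp m, Finset.sum_comm]
      refine Finset.sum_congr rfl fun α _ => ?_
      rw [Finset.sum_comm]
      refine Finset.sum_congr rfl fun β _ => ?_
      rw [Finset.sum_smul]
    rw [h1]
    have h2 : ∀ α β, (∑ m ∈ box, ((m α : ℤ) : ℝ) * ((m β : ℤ) : ℝ))
        = if α = β then (2 * (W:ℝ) + 1) ^ (K - 1) * ∑ j ∈ Finset.Icc (-(W:ℤ)) W, (j:ℝ)^2
          else 0 := by
      intro α β
      rw [hbox, box_eq]
      exact moment2 K W α β
    simp only [h2, ite_smul, zero_smul, Finset.sum_ite_eq, Finset.mem_univ, if_true]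
    rw [Finset.smul_sum, Finset.smul_sum]
    refine Finset.sum_congr rfl fun α _ => ?_
    rw [smul_smul, hscal]
  -- cardinality
  have hcardc : c * ((box.card : ℕ) : ℝ) = 1 := by
    have : box.card = (2 * W + 1) ^ K := by
      rw [hbox, box_eq, Fintype.card_piFinset]
      simp [card_Icc_int W]
    rw [this, hc]
    push_cast
    rw [inv_mul_cancel₀ (by positivity)]
  -- per-direction Taylor limits
  have htay : ∀ m ∈ box, Tendsto (fun L : ℝ => (L ^ 2) • (G (x + L⁻¹ • wv m) - G x
      - L⁻¹ • fderiv ℝ G x (wv m) - (2 * L ^ 2)⁻¹ • B (wv m) (wv m))) atTop (nhds 0) :=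
    fun m _ => taylor2L G hG x (wv m)
  have hsum0 : Tendsto (fun L : ℝ => c • ∑ m ∈ box, ((L ^ 2) • (G (x + L⁻¹ • wv m) - G x
      - L⁻¹ • fderiv ℝ G x (wv m) - (2 * L ^ 2)⁻¹ • B (wv m) (wv m)))) atTop (nhds 0) := by
    have h := tendsto_finset_sum box htay
    simpa using h.const_smul c
  refine hsum0.congr' ?_
  filter_upwards [eventually_gt_atTop (0:ℝ)] with L hL
  have hL0 : L ≠ 0 := hL.ne'
  have hGapp : ∀ z, gradient F (v z) = G z := fun _ => rfl
  have hargL : ∀ m : Fin K → ℤ,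
      G (x + (WithLp.equiv 2 (Fin K → ℝ)).symm (fun α : Fin K => (m α : ℝ) / L))
        = G (x + L⁻¹ • wv m) := fun m => by rw [harg m L hL0]
  simp only [hGapp]
  simp only [hargL]
  rw [hS]
  have hsplit : ∑ m ∈ box, ((L ^ 2) • (G (x + L⁻¹ • wv m) - G x
        - L⁻¹ • fderiv ℝ G x (wv m) - (2 * L ^ 2)⁻¹ • B (wv m) (wv m)))
      = (L ^ 2) • ((∑ m ∈ box, G (x + L⁻¹ • wv m)) - ((box.card : ℕ) : ℝ) • G x
        - (2 * L ^ 2)⁻¹ • ∑ m ∈ box, B (wv m) (wv m)) := by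
    rw [← Finset.smul_sum]
    congr 1
    have t1 : ∑ m ∈ box, L⁻¹ • fderiv ℝ G x (wv m) = 0 := by
      rw [← Finset.smul_sum, ← map_sum, hw0, map_zero, smul_zero]
    rw [Finset.sum_sub_distrib, Finset.sum_sub_distrib, Finset.sum_sub_distrib, Finset.sum_const,
      t1, sub_zero, ← Finset.smul_sum, ← Nat.cast_smul_eq_nsmul ℝ]
  rw [hsplit]
  calc c • ((L ^ 2) • ((∑ m ∈ box, G (x + L⁻¹ • wv m)) - ((box.card : ℕ) : ℝ) • G x
        - (2 * L ^ 2)⁻¹ • ∑ m ∈ box, B (wv m) (wv m)))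
      = (L ^ 2) • (c • (∑ m ∈ box, G (x + L⁻¹ • wv m))
        - (c * ((box.card : ℕ) : ℝ)) • G x
        - (2 * L ^ 2)⁻¹ • (c • ∑ m ∈ box, B (wv m) (wv m))) := by module
    _ = (L ^ 2) • (c • (∑ m ∈ box, G (x + L⁻¹ • wv m)) - (1:ℝ) • G x
        - (2 * L ^ 2)⁻¹ • (σ2 • ∑ α, B (e α) (e α))) := by rw [hQ, hcardc]
    _ = (L ^ 2) • (c • (∑ m ∈ box, G (x + L⁻¹ • wv m)) - G x
        - (σ2 / (2 * L ^ 2)) • ∑ α, B (e α) (e α)) := by module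
end

section
/- Let N ≥ 1, let G : ℝ^N → ℝ be twice continuously differentiable and F : ℝ^N → ℝ differentiable, let U ⊆ ℝ^N be open, and let Φ : U → ℝ^N be differentiable with ∇G(Φ(ṽ)) = ṽ for all ṽ ∈ U (Φ is a right inverse of ∇G). Then for all ṽ ∈ U, ∇(V ∘ Φ)(ṽ) = Φ(ṽ) − ∇F(ṽ); i.e. the vector field A(ṽ) = Φ(ṽ) − ∇F(ṽ) appearing in the continuum density-evolution equation is conservative, with potential V ∘ Φ. -/
open scoped InnerProductSpace

/-- Let `G` be twice continuously differentiable, `F`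
differentiable, `U` open and `Φ` a differentiable right inverse of `∇G` on `U`
(`∇G(Φ(ṽ)) = ṽ` for `ṽ ∈ U`).  Then for every `ṽ ∈ U`,
`∇(V ∘ Φ)(ṽ) = Φ(ṽ) − ∇F(ṽ)`, where `V(u) = ⟪u, ∇G(u)⟫ − G(u) − F(∇G(u))`:
the field `A(ṽ) = Φ(ṽ) − ∇F(ṽ)` is conservative with potential `V ∘ Φ`. -/
theorem stmt_10 (N : ℕ) (hN : 1 ≤ N)
    (F G : EuclideanSpace ℝ (Fin N) → ℝ)
    (hG : ContDiff ℝ 2 G) (hF : Differentiable ℝ F)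
    (U : Set (EuclideanSpace ℝ (Fin N))) (hU : IsOpen U)
    (Φ : EuclideanSpace ℝ (Fin N) → EuclideanSpace ℝ (Fin N))
    (hΦdiff : ∀ v ∈ U, DifferentiableAt ℝ Φ v)
    (hΦ : ∀ v ∈ U, gradient G (Φ v) = v) :
    ∀ v ∈ U,
      gradient (fun w =>
          ⟪Φ w, gradient G (Φ w)⟫_ℝ - G (Φ w) - F (gradient G (Φ w))) v
        = Φ v - gradient F v := by
  intro v hv
  have hΦ' : HasFDerivAt Φ (fderiv ℝ Φ v) v := (hΦdiff v hv).hasFDerivAt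
  have hGdiff : Differentiable ℝ G := hG.differentiable (by norm_num)
  have hGgrad : HasGradientAt G (gradient G (Φ v)) (Φ v) :=
    (hGdiff (Φ v)).hasGradientAt
  have hGfd : HasFDerivAt G (InnerProductSpace.toDual ℝ (EuclideanSpace ℝ (Fin N)) v) (Φ v) := by
    have := hGgrad.hasFDerivAt
    rwa [hΦ v hv] at this
  have hA : HasFDerivAt (fun w => ⟪Φ w, w⟫_ℝ)
      ((fderivInnerCLM ℝ (Φ v, v)).comp ((fderiv ℝ Φ v).prod (ContinuousLinearMap.id ℝ _))) v :=
    hΦ'.inner ℝ (hasFDerivAt_id v)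
  have hB : HasFDerivAt (fun w => G (Φ w))
      ((InnerProductSpace.toDual ℝ (EuclideanSpace ℝ (Fin N)) v).comp (fderiv ℝ Φ v)) v := hGfd.comp v hΦ'
  have hC : HasFDerivAt F (InnerProductSpace.toDual ℝ (EuclideanSpace ℝ (Fin N)) (gradient F v)) v :=
    (hF v).hasGradientAt.hasFDerivAt
  have hmain : HasGradientAt (fun w => ⟪Φ w, w⟫_ℝ - G (Φ w) - F w)
      (Φ v - gradient F v) v := by
    rw [hasGradientAt_iff_hasFDerivAt]
    have h := (hA.sub hB).sub hC
    refine h.congr_fderiv ?_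
    ext h
    simp [fderivInnerCLM_apply, InnerProductSpace.toDual_apply_apply, inner_sub_left,
      real_inner_comm v ((fderiv ℝ Φ v) h)]
  have heq : (fun w => ⟪Φ w, gradient G (Φ w)⟫_ℝ - G (Φ w) - F (gradient G (Φ w)))
      =ᶠ[nhds v] (fun w => ⟪Φ w, w⟫_ℝ - G (Φ w) - F w) := by
    filter_upwards [hU.mem_nhds hv] with w hw
    rw [hΦ w hw]
  exact (hmain.congr_of_eventuallyEq heq).gradient
end

section
/- Let N ≥ 1, let F : ℝ^N → ℝ be twice continuously differentiable and G : ℝ^N → ℝ differentiable, let U ⊆ ℝ^N be open, and let Ψ : U → ℝ^N be differentiable with ∇F(Ψ(ũ)) = ũ for all ũ ∈ U (Ψ is a right inverse of ∇F). Then for all ũ ∈ U, ∇(Ṽ ∘ Ψ)(ũ) = Ψ(ũ) − ∇G(ũ); i.e. the vector field Ψ(ũ) − ∇G(ũ) is conservative, with potential Ṽ ∘ Ψ. -/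
open scoped InnerProductSpace

/-- Let `F` be twice continuously differentiable, `G`
differentiable, `U` open and `Ψ` a differentiable right inverse of `∇F` on `U`
(`∇F(Ψ(ũ)) = ũ` for `ũ ∈ U`).  Then for every `ũ ∈ U`,
`∇(Ṽ ∘ Ψ)(ũ) = Ψ(ũ) − ∇G(ũ)`, where `Ṽ(v) = ⟪∇F(v), v⟫ − G(∇F(v)) − F(v)`:
the field `Ψ(ũ) − ∇G(ũ)` is conservative with potential `Ṽ ∘ Ψ`. -/
theorem stmt_11 (N : ℕ) (hN : 1 ≤ N)
    (F G : EuclideanSpace ℝ (Fin N) → ℝ)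
    (hF : ContDiff ℝ 2 F) (hG : Differentiable ℝ G)
    (U : Set (EuclideanSpace ℝ (Fin N))) (hU : IsOpen U)
    (Ψ : EuclideanSpace ℝ (Fin N) → EuclideanSpace ℝ (Fin N))
    (hΨdiff : ∀ u ∈ U, DifferentiableAt ℝ Ψ u)
    (hΨ : ∀ u ∈ U, gradient F (Ψ u) = u) :
    ∀ u ∈ U,
      gradient (fun w =>
          ⟪gradient F (Ψ w), Ψ w⟫_ℝ - G (gradient F (Ψ w)) - F (Ψ w)) u
        = Ψ u - gradient G u := by
  intro u hu
  -- derivative of Ψ at u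
  obtain ⟨Ψ', hΨ'⟩ : ∃ Ψ', HasFDerivAt Ψ Ψ' u := ⟨_, (hΨdiff u hu).hasFDerivAt⟩
  -- F has gradient u at Ψ u
  have hFgrad : HasGradientAt F u (Ψ u) := by
    have := ((hF.differentiable two_ne_zero) (Ψ u)).hasGradientAt
    rwa [hΨ u hu] at this
  have hFfd : HasFDerivAt F ((InnerProductSpace.toDual ℝ (EuclideanSpace ℝ (Fin N))) u) (Ψ u) :=
    hFgrad.hasFDerivAt
  have hFΨ : HasFDerivAt (fun w => F (Ψ w))
      (((InnerProductSpace.toDual ℝ (EuclideanSpace ℝ (Fin N))) u).comp Ψ') u := hFfd.comp u hΨ'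
  have hGfd : HasFDerivAt G ((InnerProductSpace.toDual ℝ (EuclideanSpace ℝ (Fin N))) (gradient G u)) u :=
    ((hG u).hasGradientAt).hasFDerivAt
  have hid : HasFDerivAt (fun w : EuclideanSpace ℝ (Fin N) => w) (ContinuousLinearMap.id ℝ (EuclideanSpace ℝ (Fin N))) u :=
    hasFDerivAt_id u
  have hinner : HasFDerivAt (fun w : EuclideanSpace ℝ (Fin N) => ⟪w, Ψ w⟫_ℝ)
      ((fderivInnerCLM ℝ (u, Ψ u)).comp ((ContinuousLinearMap.id ℝ (EuclideanSpace ℝ (Fin N))).prod Ψ')) u :=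
    hid.inner ℝ hΨ'
  -- the auxiliary function
  have haux : HasGradientAt (fun w : EuclideanSpace ℝ (Fin N) => ⟪w, Ψ w⟫_ℝ - G w - F (Ψ w))
      (Ψ u - gradient G u) u := by
    rw [hasGradientAt_iff_hasFDerivAt]
    have h := (hinner.sub hGfd).sub hFΨ
    refine h.congr_fderiv ?_
    ext v
    simp [fderivInnerCLM_apply, real_inner_comm, inner_sub_left]
    have hs : ∑ x : Fin N, Ψ u x * v x = ∑ x : Fin N, v x * Ψ u x :=
      Finset.sum_congr rfl fun i _ => mul_comm _ _
    linarith [hs]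
  have heq : (fun w =>
      ⟪gradient F (Ψ w), Ψ w⟫_ℝ - G (gradient F (Ψ w)) - F (Ψ w)) =ᶠ[nhds u]
      (fun w : EuclideanSpace ℝ (Fin N) => ⟪w, Ψ w⟫_ℝ - G w - F (Ψ w)) := by
    filter_upwards [hU.mem_nhds hu] with w hw
    rw [hΨ w hw]
  exact (haux.congr_of_eventuallyEq heq).gradient
end
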